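/- For every c > 0 there exists N_0(c) such that for all N ≥ N_0(c), with Q-probability at least 1 − e^{−cN} the following holds: for every pair of distinct configurations x, y ∈ {−1,+1}^N there exists a self-avoiding path x = z_0, z_1, …, z_k = y, in which consecutive configurations differ in exactly one coordinate, of length k ≤ N, such that every interior point z_i (0 < i < k) satisfies H(z_i) ≤ √(2(1+c) N log N). -/

import Mathlib

open MeasureTheory ProbabilityTheory Filter
open scoped BigOperators ENNReal NNReal

noncomputable section

/-- Spin configurations of the REM (we identify `{-1,+1}` with `Bool`). -/
abbrev Conf (N : ℕ) : Type := Fin N → Bool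

/-- The critical inverse temperature `β_c = √(2 log 2)`. -/
def betaC : ℝ := Real.sqrt (2 * Real.log 2)

/-- The law of the REM Hamiltonian: the coordinates `H σ` are i.i.d. centered
Gaussians of variance `N`. -/
def QN (N : ℕ) : Measure (Conf N → ℝ) := Measure.pi fun _ => gaussianReal 0 N

namespace REMaux

variable {N : ℕ}

/-- flip the coordinates in `S` -/
def flipF (x : Conf N) (S : Finset (Fin N)) : Conf N := fun i => xor (x i) (decide (i ∈ S))

@[simp] lemma flipF_empty (x : Conf N) : flipF x ∅ = x := by
  funext i; simp [flipF]

lemma flipF_inj (x : Conf N) : Function.Injective (flipF x) := by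
  intro S T h
  ext i
  have := congrFun h i
  simp only [flipF] at this
  have : (decide (i ∈ S)) = (decide (i ∈ T)) := by
    cases x i <;> simpa using this
  simpa using this

def diffSet (x y : Conf N) : Finset (Fin N) := Finset.univ.filter (fun i => x i ≠ y i)

lemma mem_diffSet {x y : Conf N} {i : Fin N} : i ∈ diffSet x y ↔ x i ≠ y i := by
  simp [diffSet]

lemma flipF_diffSet (x y : Conf N) : flipF x (diffSet x y) = y := by
  funext i
  simp only [flipF, diffSet, Finset.mem_filter, Finset.mem_univ, true_and]
  by_cases h : x i = y i <;> cases hx : x i <;> cases hy : y i <;> simp_all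

lemma diffSet_card_pos {x y : Conf N} (h : x ≠ y) : 0 < (diffSet x y).card := by
  rw [Finset.card_pos]
  by_contra hc
  apply h
  funext i
  have : i ∉ diffSet x y := fun hi => hc ⟨i, hi⟩
  rw [mem_diffSet, not_not] at this
  exact this

lemma diffSet_card_le (x y : Conf N) : (diffSet x y).card ≤ N := by
  simpa using (Finset.card_le_card (Finset.subset_univ (diffSet x y))).trans_eq (by simp)

lemma hammingDist_flipF_insert (x : Conf N) {S : Finset (Fin N)} {a : Fin N} (ha : a ∉ S) :
    hammingDist (flipF x S) (flipF x (insert a S)) = 1 := by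
  unfold hammingDist
  rw [show (Finset.univ.filter fun i => flipF x S i ≠ flipF x (insert a S) i) = {a} from ?_]
  · simp
  ext i
  simp only [Finset.mem_filter, Finset.mem_univ, true_and, Finset.mem_singleton]
  simp only [flipF]
  constructor
  · intro hne
    by_contra hia
    have hmem : decide (i ∈ S) = decide (i ∈ insert a S) := by
      rw [decide_eq_decide, Finset.mem_insert]
      exact (or_iff_right hia).symm
    rw [hmem] at hne
    exact hne rfl
  · rintro rfl
    have h1 : decide (i ∈ S) = false := by simpa using ha
    have h2 : decide (i ∈ insert i S) = true := by simp
    rw [h1, h2]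
    cases x i <;> simp

lemma zip_tail_iff_chain' {α : Type*} (R : α → α → Prop) (l : List α) :
    (∀ e ∈ l.zip l.tail, R e.1 e.2) ↔ l.Chain' R := by
  unfold List.Chain'
  induction l with
  | nil => simp
  | cons a l ih =>
    cases l with
    | nil => simp
    | cons b l =>
      rw [List.isChain_cons_cons]
      constructor
      · intro h
        refine ⟨h (a, b) (by simp), ?_⟩
        rw [← ih]
        intro e he
        refine h e ?_
        simp only [List.tail_cons, List.zip_cons_cons, List.mem_cons]
        right
        simpa using he
      · rintro ⟨h1, h2⟩ e he
        simp only [List.tail_cons, List.zip_cons_cons, List.mem_cons] at he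
        rcases he with rfl | he
        · exact h1
        · exact (ih.2 h2) e he


-- stage 2
def sdl (x y : Conf N) : List (Fin N) := (diffSet x y).sort (· ≤ ·)

lemma sdl_nodup (x y : Conf N) : (sdl x y).Nodup := (diffSet x y).sort_nodup _
lemma sdl_length (x y : Conf N) : (sdl x y).length = (diffSet x y).card :=
  (diffSet x y).length_sort _
lemma sdl_toFinset (x y : Conf N) : (sdl x y).toFinset = diffSet x y :=
  (diffSet x y).sort_toFinset _

/-- prefix of length `t` of the rotation by `j` of the sorted list of differing coords -/
def gpre (x y : Conf N) (j t : ℕ) : Finset (Fin N) := (((sdl x y).rotate j).take t).toFinset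

def dpre (x y : Conf N) (t : ℕ) : Finset (Fin N) := ((sdl x y).take t).toFinset

lemma take_succ_toFinset {w : List (Fin N)} (hw : w.Nodup) {t : ℕ} (ht : t < w.length) :
    ∃ a, (w.take (t+1)).toFinset = insert a ((w.take t).toFinset) ∧
      a ∉ (w.take t).toFinset ∧ a ∈ w := by
  refine ⟨w[t], ?_, ?_, List.getElem_mem ht⟩
  · have h1 : w.take (t+1) = w.take t ++ [w[t]] := by
      rw [List.take_succ]
      simp [List.getElem?_eq_getElem ht]
    rw [h1, List.toFinset_append]
    rw [Finset.insert_eq, Finset.union_comm]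
    simp
  · have h1 : w.take (t+1) = w.take t ++ [w[t]] := by
      rw [List.take_succ]
      simp [List.getElem?_eq_getElem ht]
    have hnd : (w.take (t+1)).Nodup := (List.take_sublist _ _).nodup hw
    rw [h1, List.nodup_append] at hnd
    have := hnd.2.2
    intro hmem
    rw [List.mem_toFinset] at hmem
    exact this _ hmem _ (List.mem_singleton_self _) rfl

lemma card_take_toFinset {w : List (Fin N)} (hw : w.Nodup) {t : ℕ} (ht : t ≤ w.length) :
    ((w.take t).toFinset).card = t := by
  rw [List.toFinset_card_of_nodup ((List.take_sublist _ _).nodup hw)]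
  simp [ht]

lemma take_toFinset_subset (w : List (Fin N)) (t : ℕ) :
    (w.take t).toFinset ⊆ w.toFinset := fun a ha => by
  rw [List.mem_toFinset] at *
  exact (List.take_sublist _ _).mem ha


-- stage 3 : gpre / dpre lemmas
lemma rot_nodup (x y : Conf N) (j : ℕ) : ((sdl x y).rotate j).Nodup :=
  List.nodup_rotate.mpr (sdl_nodup x y)
lemma rot_length (x y : Conf N) (j : ℕ) :
    ((sdl x y).rotate j).length = (diffSet x y).card := by
  rw [List.length_rotate, sdl_length]
lemma rot_toFinset (x y : Conf N) (j : ℕ) :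
    ((sdl x y).rotate j).toFinset = diffSet x y := by
  rw [List.toFinset_eq_of_perm _ _ (List.rotate_perm _ _), sdl_toFinset]

@[simp] lemma gpre_zero (x y : Conf N) (j : ℕ) : gpre x y j 0 = ∅ := by simp [gpre]

lemma gpre_last (x y : Conf N) (j : ℕ) : gpre x y j ((diffSet x y).card) = diffSet x y := by
  rw [gpre, ← rot_length x y j, List.take_length, rot_toFinset]

lemma gpre_subset (x y : Conf N) (j t : ℕ) : gpre x y j t ⊆ diffSet x y := by
  rw [← rot_toFinset x y j]
  exact take_toFinset_subset _ _

lemma gpre_card (x y : Conf N) (j : ℕ) {t : ℕ} (ht : t ≤ (diffSet x y).card) :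
    (gpre x y j t).card = t :=
  card_take_toFinset (rot_nodup x y j) (by rwa [rot_length])

lemma gpre_step (x y : Conf N) (j : ℕ) {t : ℕ} (ht : t < (diffSet x y).card) :
    ∃ a, gpre x y j (t+1) = insert a (gpre x y j t) ∧ a ∉ gpre x y j t := by
  obtain ⟨a, h1, h2, _⟩ := take_succ_toFinset (rot_nodup x y j) (t := t) (by rwa [rot_length])
  exact ⟨a, h1, h2⟩

@[simp] lemma dpre_zero (x y : Conf N) : dpre x y 0 = ∅ := by simp [dpre]

lemma dpre_last (x y : Conf N) : dpre x y ((diffSet x y).card) = diffSet x y := by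
  rw [dpre, ← sdl_length x y, List.take_length, sdl_toFinset]

lemma dpre_subset (x y : Conf N) (t : ℕ) : dpre x y t ⊆ diffSet x y := by
  rw [← sdl_toFinset x y]; exact take_toFinset_subset _ _

lemma dpre_card (x y : Conf N) {t : ℕ} (ht : t ≤ (diffSet x y).card) :
    (dpre x y t).card = t :=
  card_take_toFinset (sdl_nodup x y) (by rwa [sdl_length])

lemma dpre_step (x y : Conf N) {t : ℕ} (ht : t < (diffSet x y).card) :
    ∃ a, dpre x y (t+1) = insert a (dpre x y t) ∧ a ∉ dpre x y t ∧ a ∈ diffSet x y := by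
  obtain ⟨a, h1, h2, h3⟩ := take_succ_toFinset (sdl_nodup x y) (t := t) (by rwa [sdl_length])
  refine ⟨a, h1, h2, ?_⟩
  rw [← sdl_toFinset x y]
  exact List.mem_toFinset.mpr h3


section Cyclic
variable {α : Type*} [DecidableEq α]
omit [DecidableEq α] in
lemma mem_rot_take {L : List α} (hL : L.Nodup) {j t k : ℕ} (hk : k < L.length)
    (htL : t ≤ L.length) :
    L[k] ∈ (L.rotate j).take t ↔ ∃ s, s < t ∧ (s + j) % L.length = k := by
  rw [List.mem_take_iff_getElem]
  constructor
  · rintro ⟨s, hs, hsk⟩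
    rw [List.length_rotate] at hs
    have hs' : s < L.length := lt_of_lt_of_le hs (min_le_right _ _)
    rw [List.getElem_rotate] at hsk
    exact ⟨s, lt_of_lt_of_le hs (min_le_left _ _), hL.getElem_inj_iff.mp hsk⟩
  · rintro ⟨s, hs, hsk⟩
    subst hsk
    refine ⟨s, by rw [List.length_rotate]; omega, ?_⟩
    exact List.getElem_rotate L j s _

lemma rotate_take_toFinset_inj {L : List α} (hL : L.Nodup) {j j' t : ℕ}
    (hj : j < L.length) (hj' : j' < L.length) (ht0 : 0 < t) (ht : t < L.length)
    (h : ((L.rotate j).take t).toFinset = ((L.rotate j').take t).toFinset) : j = j' := by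
  set d := L.length with hdd
  have hmem : ∀ k (hk : k < d), (∃ s, s < t ∧ (s + j) % d = k) ↔
      (∃ s, s < t ∧ (s + j') % d = k) := by
    intro k hk
    rw [← mem_rot_take hL hk (le_of_lt ht), ← mem_rot_take hL hk (le_of_lt ht), ← List.mem_toFinset, h, List.mem_toFinset]
  -- general facts
  have fact1 : ∀ i, i < d → (∃ s, s < t ∧ (s + i) % d = i) :=
    fun i hi => ⟨0, ht0, by simpa using Nat.mod_eq_of_lt hi⟩
  have fact2 : ∀ i, i < d → ¬(∃ s, s < t ∧ (s + i) % d = (i + d - 1) % d) := by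
    rintro i hi ⟨s, hs, hmod⟩
    have h1 : i + d - 1 = (d - 1) + i := by omega
    rw [h1] at hmod
    have : s % d = (d - 1) % d := Nat.ModEq.add_right_cancel' i hmod
    rw [Nat.mod_eq_of_lt (by omega), Nat.mod_eq_of_lt (by omega)] at this
    omega
  have fact3 : ∀ i k, i < d → k < d → k ≠ i → (∃ s, s < t ∧ (s + i) % d = k) →
      (∃ s, s < t ∧ (s + i) % d = (k + d - 1) % d) := by
    rintro i k hi hk hki ⟨s, hs, hmod⟩
    have hs0 : s ≠ 0 := by
      rintro rfl
      rw [Nat.zero_add, Nat.mod_eq_of_lt hi] at hmod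
      exact hki hmod.symm
    refine ⟨s - 1, by omega, ?_⟩
    have h1 : k + d - 1 = (k + (d - 1)) := by omega
    have h2 : (k + (d-1)) % d = ((s + i) % d + (d-1)) % d := by rw [hmod]
    have h3 : ((s + i) % d + (d-1)) % d = (s + i + (d-1)) % d := Nat.mod_add_mod _ _ _
    have h4 : s + i + (d - 1) = (s - 1 + i) + d := by omega
    rw [h1, h2, h3, h4, Nat.add_mod_right]
  by_contra hne
  have m1 : ∃ s, s < t ∧ (s + j) % d = j' := (hmem j' hj').mpr (fact1 j' hj')
  have m2 := fact3 j j' hj hj' (fun h => hne h.symm) m1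
  have m3 : (j' + d - 1) % d < d := Nat.mod_lt _ (by omega)
  exact fact2 j' hj' ((hmem _ m3).mp m2)

end Cyclic

-- STAGE 4
def geoList (x y : Conf N) (j : ℕ) : List (Finset (Fin N)) :=
  ∅ :: (((List.range ((diffSet x y).card - 1)).map fun t => gpre x y j (t+1)) ++ [diffSet x y])

def detList (x y : Conf N) (cc : Fin N) : List (Finset (Fin N)) :=
  ∅ :: (((List.range ((diffSet x y).card + 1)).map fun t => insert cc (dpre x y t)) ++ [diffSet x y])

def geoInt (x y : Conf N) (j : ℕ) : Finset (Conf N) :=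
  (Finset.range ((diffSet x y).card - 1)).image fun t => flipF x (gpre x y j (t+1))

def detInt (x y : Conf N) (cc : Fin N) : Finset (Conf N) :=
  (Finset.range ((diffSet x y).card + 1)).image fun t => flipF x (insert cc (dpre x y t))

def IsGoodPath (thr : ℝ) (H : Conf N → ℝ) (x y : Conf N) (l : List (Conf N)) : Prop :=
  l.head? = some x ∧ l.getLast? = some y ∧ l.Nodup ∧
  (∀ e ∈ l.zip l.tail, hammingDist e.1 e.2 = 1) ∧ l.length ≤ N + 1 ∧
  ∀ z ∈ l.tail.dropLast, H z ≤ thr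

-- generic shape lemmas
section Shape
variable {α : Type*} (a b : α) (mid : List α)

lemma shape_getLast? : (a :: (mid ++ [b])).getLast? = some b := by
  rw [show a :: (mid ++ [b]) = (a :: mid) ++ [b] by simp, List.getLast?_concat]

lemma shape_tail_dropLast : (a :: (mid ++ [b])).tail.dropLast = mid := by
  simp [List.dropLast_concat]

variable {a b mid}

lemma shape_chain' {R : α → α → Prop} (h1 : ∀ c ∈ mid.head?, R a c) (h2 : mid.Chain' R)
    (h3 : ∀ c ∈ mid.getLast?, R c b) (h4 : mid = [] → R a b) :
    (a :: (mid ++ [b])).Chain' R := by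
  unfold List.Chain' at h2 ⊢
  rw [List.isChain_cons]
  constructor
  · intro h hh
    cases mid with
    | nil => simp at hh; subst hh; exact h4 rfl
    | cons c l => simp at hh; subst hh; exact h1 _ rfl
  · rw [List.isChain_append]
    refine ⟨h2, List.isChain_singleton b, ?_⟩
    intro p hp q hq
    simp at hq; subst hq
    exact h3 p hp

lemma shape_nodup (ha_mid : a ∉ mid) (hab : a ≠ b) (hmid : mid.Nodup) (hb : b ∉ mid) :
    (a :: (mid ++ [b])).Nodup := by
  rw [List.nodup_cons, List.nodup_append]
  refine ⟨?_, hmid, by simp, ?_⟩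
  · simp only [List.mem_append, List.mem_singleton]
    rintro (h | rfl)
    exacts [ha_mid h, hab rfl]
  · intro z hz
    simp only [List.mem_singleton]
    rintro _ rfl rfl
    exact hb hz

end Shape

lemma geo_stepR (x y : Conf N) (j : ℕ) {t : ℕ} (ht : t < (diffSet x y).card) :
    hammingDist (flipF x (gpre x y j t)) (flipF x (gpre x y j (t+1))) = 1 := by
  obtain ⟨a, h1, h2⟩ := gpre_step x y j ht
  rw [h1]
  exact hammingDist_flipF_insert x h2

lemma geo_good {x y : Conf N} (hxy : x ≠ y) (j : ℕ) (H : Conf N → ℝ) (thr : ℝ)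
    (hH : ∀ z ∈ geoInt x y j, H z ≤ thr) :
    IsGoodPath thr H x y ((geoList x y j).map (flipF x)) := by
  set d := (diffSet x y).card with hd
  have hd1 : 1 ≤ d := diffSet_card_pos hxy
  have hmap : (geoList x y j).map (flipF x) =
      flipF x ∅ :: ((((List.range (d - 1)).map fun t => gpre x y j (t+1)).map (flipF x))
        ++ [flipF x (diffSet x y)]) := by
    simp [geoList, List.map_append, hd]
  rw [hmap]
  set M := ((List.range (d - 1)).map fun t => gpre x y j (t+1)).map (flipF x) with hM
  refine ⟨?_, ?_, ?_, ?_, ?_, ?_⟩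
  · simp [flipF_empty]
  · rw [shape_getLast?, flipF_diffSet]
  · -- Nodup
    apply shape_nodup
    · -- flipF x ∅ ∉ M
      rw [hM]
      simp only [List.mem_map, List.mem_range, not_exists]
      rintro S ⟨⟨t, htl, rfl⟩, hf⟩
      have heq := flipF_inj x hf
      have hc := gpre_card x y j (t := t+1) (by omega)
      rw [heq] at hc
      simp at hc
    · intro hxx
      have heq := flipF_inj x hxx
      have hc := gpre_card x y j (t := d) le_rfl
      rw [gpre_last, ← heq] at hc
      simp at hc
      omega
    · rw [hM, List.map_map]
      refine List.Nodup.map_on ?_ (List.nodup_range)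
      intro t ht t' ht' hf
      rw [List.mem_range] at ht ht'
      have heq : gpre x y j (t+1) = gpre x y j (t'+1) := flipF_inj x hf
      have hc := gpre_card x y j (t := t+1) (by omega)
      have hc' := gpre_card x y j (t := t'+1) (by omega)
      rw [heq, hc'] at hc
      omega
    · rw [hM]
      simp only [List.mem_map, List.mem_range, not_exists]
      rintro S ⟨⟨t, htl, rfl⟩, hf⟩
      have heq : gpre x y j (t+1) = diffSet x y := flipF_inj x hf
      have hc := gpre_card x y j (t := t+1) (by omega)
      rw [heq] at hc
      omega
  · -- chain
    refine (zip_tail_iff_chain' (fun a b => hammingDist a b = 1) _).mpr (shape_chain' ?_ ?_ ?_ ?_)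
    · intro cz hcz
      rw [hM, List.head?_map, List.head?_map] at hcz
      cases hd1' : d - 1 with
      | zero => rw [hd1'] at hcz; simp at hcz
      | succ n =>
        rw [hd1', List.range_succ_eq_map] at hcz
        simp only [List.head?_cons, Option.map_some] at hcz
        obtain rfl : flipF x (gpre x y j (0+1)) = cz := by simpa using hcz
        have := geo_stepR x y j (t := 0) (by omega)
        rwa [gpre_zero] at this
    · rw [hM]
      unfold List.Chain'
      rw [List.isChain_map, List.isChain_map]
      cases hd1' : d - 1 with
      | zero => simp
      | succ n =>
        rw [List.isChain_range_succ]
        intro m hm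
        exact geo_stepR x y j (by omega)
    · intro cz hcz
      rw [hM, List.getLast?_map, List.getLast?_map] at hcz
      cases hd1' : d - 1 with
      | zero => rw [hd1'] at hcz; simp at hcz
      | succ n =>
        rw [hd1', List.range_succ, List.getLast?_concat] at hcz
        simp only [Option.map_some] at hcz
        obtain rfl : flipF x (gpre x y j (n+1)) = cz := by simpa using hcz
        have := geo_stepR x y j (t := n + 1) (by omega)
        rw [show n + 1 + 1 = d from by omega, gpre_last] at this
        exact this
    · intro hM0
      have hd1'' : d = 1 := by
        rw [hM] at hM0
        simp only [List.map_eq_nil_iff, List.range_eq_nil] at hM0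
        omega
      have := geo_stepR x y j (t := 0) (by omega)
      rw [gpre_zero, show (0:ℕ) + 1 = d from by omega, gpre_last] at this
      exact this
  · -- length
    rw [hM]
    simp only [List.length_cons, List.length_append, List.length_map, List.length_range,
      List.length_singleton, List.length_nil]
    have := diffSet_card_le x y
    omega
  · -- interior
    rw [shape_tail_dropLast]
    intro z hz
    rw [hM, List.map_map] at hz
    obtain ⟨t, htl, rfl⟩ := List.mem_map.mp hz
    rw [List.mem_range] at htl
    exact hH _ (Finset.mem_image.mpr ⟨t, Finset.mem_range.mpr htl, rfl⟩)


lemma det_good {x y : Conf N} (hxy : x ≠ y) {cc : Fin N} (hcc : cc ∉ diffSet x y)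
    (hlen : (diffSet x y).card + 2 ≤ N) (H : Conf N → ℝ) (thr : ℝ)
    (hH : ∀ z ∈ detInt x y cc, H z ≤ thr) :
    IsGoodPath thr H x y ((detList x y cc).map (flipF x)) := by
  set d := (diffSet x y).card with hd
  have hd1 : 1 ≤ d := diffSet_card_pos hxy
  have hccd : ∀ t, cc ∉ dpre x y t := fun t h => hcc (dpre_subset x y t h)
  have hmap : (detList x y cc).map (flipF x) =
      flipF x ∅ :: ((((List.range (d + 1)).map fun t => insert cc (dpre x y t)).map (flipF x))
        ++ [flipF x (diffSet x y)]) := by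
    simp [detList, List.map_append, hd]
  rw [hmap]
  set M := ((List.range (d + 1)).map fun t => insert cc (dpre x y t)).map (flipF x) with hM
  refine ⟨?_, ?_, ?_, ?_, ?_, ?_⟩
  · simp [flipF_empty]
  · rw [shape_getLast?, flipF_diffSet]
  · apply shape_nodup
    · rw [hM]
      simp only [List.mem_map, List.mem_range, not_exists]
      rintro S ⟨⟨t, htl, rfl⟩, hf⟩
      have heq : insert cc (dpre x y t) = ∅ := flipF_inj x hf
      exact Finset.insert_ne_empty _ _ heq
    · intro hxx
      have heq : (∅ : Finset (Fin N)) = diffSet x y := flipF_inj x hxx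
      have := diffSet_card_pos hxy
      rw [← heq] at this
      simp at this
    · rw [hM, List.map_map]
      refine List.Nodup.map_on ?_ (List.nodup_range)
      intro t ht t' ht' hf
      rw [List.mem_range] at ht ht'
      have heq : insert cc (dpre x y t) = insert cc (dpre x y t') := flipF_inj x hf
      have hc1 : (insert cc (dpre x y t)).card = t + 1 := by
        rw [Finset.card_insert_of_notMem (hccd t), dpre_card x y (by omega)]
      have hc2 : (insert cc (dpre x y t')).card = t' + 1 := by
        rw [Finset.card_insert_of_notMem (hccd t'), dpre_card x y (by omega)]
      rw [heq, hc2] at hc1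
      omega
    · rw [hM]
      simp only [List.mem_map, List.mem_range, not_exists]
      rintro S ⟨⟨t, htl, rfl⟩, hf⟩
      have heq : insert cc (dpre x y t) = diffSet x y := flipF_inj x hf
      exact hcc (heq ▸ Finset.mem_insert_self cc (dpre x y t))
  · refine (zip_tail_iff_chain' (fun a b => hammingDist a b = 1) _).mpr (shape_chain' ?_ ?_ ?_ ?_)
    · intro cz hcz
      rw [hM, List.head?_map, List.head?_map, List.range_succ_eq_map] at hcz
      simp only [List.head?_cons, Option.map_some] at hcz
      obtain rfl : flipF x (insert cc (dpre x y 0)) = cz := by simpa using hcz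
      rw [dpre_zero]
      exact hammingDist_flipF_insert x (Finset.notMem_empty cc)
    · rw [hM]
      unfold List.Chain'
      rw [List.isChain_map, List.isChain_map, List.isChain_range_succ]
      intro m hm
      obtain ⟨a, ha1, ha2, ha3⟩ := dpre_step x y (t := m) (by omega)
      have hacc : a ≠ cc := fun h => hcc (h ▸ ha3)
      have : insert cc (dpre x y (m+1)) = insert a (insert cc (dpre x y m)) := by
        rw [ha1, Finset.insert_comm]
      rw [this]
      exact hammingDist_flipF_insert x (by
        simp only [Finset.mem_insert, not_or]
        exact ⟨hacc, ha2⟩)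
    · intro cz hcz
      rw [hM, List.getLast?_map, List.getLast?_map, List.range_succ, List.getLast?_concat] at hcz
      simp only [Option.map_some] at hcz
      obtain rfl : flipF x (insert cc (dpre x y d)) = cz := by simpa using hcz
      rw [hammingDist_comm, dpre_last]
      exact hammingDist_flipF_insert x hcc
    · intro hM0
      rw [hM] at hM0
      simp [List.range_eq_nil] at hM0
  · rw [hM]
    simp only [List.length_cons, List.length_append, List.length_map, List.length_range,
      List.length_singleton, List.length_nil]
    omega
  · rw [shape_tail_dropLast]
    intro z hz
    rw [hM, List.map_map] at hz
    obtain ⟨t, htl, rfl⟩ := List.mem_map.mp hz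
    rw [List.mem_range] at htl
    exact hH _ (Finset.mem_image.mpr ⟨t, Finset.mem_range.mpr htl, rfl⟩)


-- STAGE 6
lemma geoInt_disjoint {x y : Conf N} {j j' : ℕ} (hj : j < (diffSet x y).card)
    (hj' : j' < (diffSet x y).card) (hne : j ≠ j') :
    Disjoint (geoInt x y j) (geoInt x y j') := by
  rw [Finset.disjoint_left]
  intro z hz hz'
  obtain ⟨t, ht, rfl⟩ := Finset.mem_image.mp hz
  obtain ⟨t', ht', heq⟩ := Finset.mem_image.mp hz'
  rw [Finset.mem_range] at ht ht'
  have hg : gpre x y j' (t'+1) = gpre x y j (t+1) := flipF_inj x heq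
  have hc : t' + 1 = t + 1 := by
    have h1 := gpre_card x y j' (t := t'+1) (by omega)
    have h2 := gpre_card x y j (t := t+1) (by omega)
    rw [hg, h2] at h1
    omega
  apply hne
  refine (rotate_take_toFinset_inj (sdl_nodup x y) ?_ ?_ (t := t+1) (by omega) ?_ ?_).symm
  · rw [sdl_length]; omega
  · rw [sdl_length]; omega
  · rw [sdl_length]; omega
  · rw [hc] at hg
    exact hg

lemma geo_det_disjoint {x y : Conf N} {j : ℕ} {cc : Fin N} (hcc : cc ∉ diffSet x y) :
    Disjoint (geoInt x y j) (detInt x y cc) := by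
  rw [Finset.disjoint_left]
  intro z hz hz'
  obtain ⟨t, ht, rfl⟩ := Finset.mem_image.mp hz
  obtain ⟨t', ht', heq⟩ := Finset.mem_image.mp hz'
  have hg : insert cc (dpre x y t') = gpre x y j (t+1) := flipF_inj x heq
  exact hcc (gpre_subset x y j (t+1) (hg ▸ Finset.mem_insert_self cc _))

lemma det_det_disjoint {x y : Conf N} {cc cc' : Fin N} (hcc' : cc' ∉ diffSet x y)
    (hne : cc ≠ cc') : Disjoint (detInt x y cc) (detInt x y cc') := by
  rw [Finset.disjoint_left]
  intro z hz hz'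
  obtain ⟨t, ht, rfl⟩ := Finset.mem_image.mp hz
  obtain ⟨t', ht', heq⟩ := Finset.mem_image.mp hz'
  have hg : insert cc' (dpre x y t') = insert cc (dpre x y t) := flipF_inj x heq
  have : cc' ∈ insert cc (dpre x y t) := hg ▸ Finset.mem_insert_self cc' _
  rcases Finset.mem_insert.mp this with h | h
  · exact hne h.symm
  · exact hcc' (dpre_subset x y t h)

def fam (x y : Conf N) : Finset (Finset (Conf N)) :=
  (Finset.range (diffSet x y).card).image (geoInt x y) ∪
    (if (diffSet x y).card + 2 ≤ N then ((diffSet x y)ᶜ).image (detInt x y) else ∅)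

lemma fam_good {x y : Conf N} (hxy : x ≠ y) (H : Conf N → ℝ) (thr : ℝ) :
    ∀ I ∈ fam x y, (∀ z ∈ I, H z ≤ thr) → ∃ l, IsGoodPath thr H x y l := by
  intro I hI hle
  rw [fam, Finset.mem_union] at hI
  rcases hI with hI | hI
  · obtain ⟨j, _, rfl⟩ := Finset.mem_image.mp hI
    exact ⟨_, geo_good hxy j H thr hle⟩
  · by_cases hcond : (diffSet x y).card + 2 ≤ N
    · rw [if_pos hcond] at hI
      obtain ⟨cc, hcc, rfl⟩ := Finset.mem_image.mp hI
      exact ⟨_, det_good hxy (Finset.mem_compl.mp hcc) hcond H thr hle⟩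
    · rw [if_neg hcond] at hI
      simp at hI

lemma fam_pairwise_disjoint {x y : Conf N} :
    ∀ I ∈ fam x y, ∀ I' ∈ fam x y, I ≠ I' → Disjoint I I' := by
  intro I hI I' hI' hne
  rw [fam, Finset.mem_union] at hI hI'
  have hdet : ∀ J, J ∈ (if (diffSet x y).card + 2 ≤ N
      then ((diffSet x y)ᶜ).image (detInt x y) else ∅) →
      ∃ cc, cc ∉ diffSet x y ∧ J = detInt x y cc := by
    intro J hJ
    by_cases hcond : (diffSet x y).card + 2 ≤ N
    · rw [if_pos hcond] at hJ
      obtain ⟨cc, hcc, rfl⟩ := Finset.mem_image.mp hJ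
      exact ⟨cc, Finset.mem_compl.mp hcc, rfl⟩
    · rw [if_neg hcond] at hJ; simp at hJ
  rcases hI with hI | hI <;> rcases hI' with hI' | hI'
  · obtain ⟨j, hj, rfl⟩ := Finset.mem_image.mp hI
    obtain ⟨j', hj', rfl⟩ := Finset.mem_image.mp hI'
    rw [Finset.mem_range] at hj hj'
    exact geoInt_disjoint hj hj' (fun h => hne (by rw [h]))
  · obtain ⟨j, hj, rfl⟩ := Finset.mem_image.mp hI
    obtain ⟨cc, hcc, rfl⟩ := hdet _ hI'
    exact geo_det_disjoint hcc
  · obtain ⟨cc, hcc, rfl⟩ := hdet _ hI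
    obtain ⟨j, hj, rfl⟩ := Finset.mem_image.mp hI'
    exact (geo_det_disjoint hcc).symm
  · obtain ⟨cc, hcc, rfl⟩ := hdet _ hI
    obtain ⟨cc', hcc', rfl⟩ := hdet _ hI'
    exact det_det_disjoint hcc' (fun h => hne (by rw [h]))

lemma fam_card_le {x y : Conf N} : ∀ I ∈ fam x y, I.card ≤ N := by
  intro I hI
  rw [fam, Finset.mem_union] at hI
  rcases hI with hI | hI
  · obtain ⟨j, hj, rfl⟩ := Finset.mem_image.mp hI
    calc (geoInt x y j).card ≤ (Finset.range ((diffSet x y).card - 1)).card :=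
          Finset.card_image_le
    _ ≤ N := by
        rw [Finset.card_range]
        have := diffSet_card_le x y
        omega
  · by_cases hcond : (diffSet x y).card + 2 ≤ N
    · rw [if_pos hcond] at hI
      obtain ⟨cc, hcc, rfl⟩ := Finset.mem_image.mp hI
      calc (detInt x y cc).card ≤ (Finset.range ((diffSet x y).card + 1)).card :=
            Finset.card_image_le
      _ ≤ N := by rw [Finset.card_range]; omega
    · rw [if_neg hcond] at hI; simp at hI

lemma fam_big {x y : Conf N} (hxy : x ≠ y) : ∅ ∈ fam x y ∨ N - 1 ≤ (fam x y).card := by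
  set d := (diffSet x y).card with hd
  have hd1 : 1 ≤ d := diffSet_card_pos hxy
  by_cases hd2 : d = 1
  · left
    rw [fam, Finset.mem_union]
    left
    refine Finset.mem_image.mpr ⟨0, Finset.mem_range.mpr (by omega), ?_⟩
    rw [geoInt, ← hd, hd2]
    simp
  · right
    have hdge2 : 2 ≤ d := by omega
    have hgeo_ne : ∀ j, (geoInt x y j).Nonempty := by
      intro j
      exact ⟨_, Finset.mem_image.mpr ⟨0, Finset.mem_range.mpr (by omega), rfl⟩⟩
    have hdet_ne : ∀ cc, (detInt x y cc).Nonempty := by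
      intro cc
      exact ⟨_, Finset.mem_image.mpr ⟨0, Finset.mem_range.mpr (by omega), rfl⟩⟩
    have hgcard : ((Finset.range d).image (geoInt x y)).card = d := by
      rw [Finset.card_image_of_injOn, Finset.card_range]
      intro j hj j' hj' heq
      by_contra hne
      rw [Finset.mem_coe, Finset.mem_range] at hj hj'
      have := geoInt_disjoint (x := x) (y := y) (by omega) (by omega) hne
      rw [heq] at this
      exact (hgeo_ne j').ne_empty (disjoint_self.mp this)
    by_cases hcond : d + 2 ≤ N
    · have hdcard : (((diffSet x y)ᶜ).image (detInt x y)).card = N - d := by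
        rw [Finset.card_image_of_injOn, Finset.card_compl]
        · simp [hd]
        · intro cc hcc cc' hcc' heq
          by_contra hne
          rw [Finset.mem_coe, Finset.mem_compl] at hcc hcc'
          have := det_det_disjoint (x := x) (y := y) hcc' hne
          rw [heq] at this
          exact (hdet_ne cc').ne_empty (disjoint_self.mp this)
      have hdisj : Disjoint ((Finset.range d).image (geoInt x y))
          (((diffSet x y)ᶜ).image (detInt x y)) := by
        rw [Finset.disjoint_left]
        intro I hI hI'
        obtain ⟨j, hj, rfl⟩ := Finset.mem_image.mp hI
        obtain ⟨cc, hcc, heq⟩ := Finset.mem_image.mp hI'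
        rw [Finset.mem_compl] at hcc
        have := geo_det_disjoint (x := x) (y := y) (j := j) hcc
        rw [heq] at this
        exact (hgeo_ne j).ne_empty (disjoint_self.mp this)
      rw [fam, ← hd, if_pos hcond, Finset.card_union_of_disjoint hdisj, hgcard, hdcard]
      omega
    · rw [fam, ← hd, if_neg hcond, Finset.union_empty, hgcard]
      omega


section Measure
open Real Set
lemma integral_exp_tail {a t : ℝ} (ha : 0 < a) :
    ∫ x in Ioi t, Real.exp (-(a*x)) = a⁻¹ * Real.exp (-(a*t)) := by
  have h := integral_comp_mul_left_Ioi (fun x => Real.exp (-x)) t ha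
  simp only [smul_eq_mul] at h
  rw [h, integral_exp_neg_Ioi]

lemma gaussian_tail {v : ℝ≥0} (hv : 0 < (v:ℝ)) {t : ℝ} (ht : Real.sqrt v ≤ t) :
    gaussianReal 0 v (Set.Ioi t) ≤ ENNReal.ofReal (Real.exp (-(t^2) / (2*v))) := by
  have hvne : v ≠ 0 := by
    intro h; rw [h] at hv; simp at hv
  have hsv : (0:ℝ) < Real.sqrt v := Real.sqrt_pos.mpr hv
  have ht0 : 0 < t := lt_of_lt_of_le hsv ht
  have ha : 0 < t / (v:ℝ) := div_pos ht0 hv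
  set a : ℝ := t / v with hadef
  set C : ℝ := (Real.sqrt (2*Real.pi*v))⁻¹ * Real.exp (t^2/(2*v)) with hC
  have hCpos : 0 < C := by positivity
  rw [gaussianReal_apply_eq_integral 0 hvne]
  apply ENNReal.ofReal_le_ofReal
  have h2v : (0:ℝ) < 2*v := by linarith
  have hpt : ∀ x ∈ Ioi t, gaussianPDFReal 0 v x ≤ C * Real.exp (-(a*x)) := by
    intro x _
    have hCe : C * Real.exp (-(a*x)) =
        (Real.sqrt (2*Real.pi*v))⁻¹ * Real.exp (t^2/(2*v) + -(a*x)) := by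
      rw [hC, mul_assoc, ← Real.exp_add]
    rw [gaussianPDFReal, hCe]
    apply mul_le_mul_of_nonneg_left _ (by positivity)
    apply Real.exp_le_exp.mpr
    rw [hadef, sub_zero]
    have hr : t^2/(2*(v:ℝ)) + -(t/v*x) = (t^2 - 2*t*x)/(2*v) := by
      field_simp
      ring
    rw [hr, div_le_div_iff₀ h2v h2v]
    nlinarith [sq_nonneg (x - t)]
  have hint1 : IntegrableOn (gaussianPDFReal 0 v) (Ioi t) :=
    (integrable_gaussianPDFReal 0 v).integrableOn
  have hint2 : IntegrableOn (fun x => C * Real.exp (-(a*x))) (Ioi t) := by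
    exact IntegrableOn.congr_fun ((exp_neg_integrableOn_Ioi t ha).const_mul C)
      (fun x _ => by rw [neg_mul]) measurableSet_Ioi
  calc ∫ x in Ioi t, gaussianPDFReal 0 v x
      ≤ ∫ x in Ioi t, C * Real.exp (-(a*x)) :=
        setIntegral_mono_on hint1 hint2 measurableSet_Ioi hpt
    _ = C * (a⁻¹ * Real.exp (-(a*t))) := by
        rw [MeasureTheory.integral_const_mul, integral_exp_tail ha]
    _ ≤ Real.exp (-(t^2) / (2*v)) := by
        have hee : Real.exp (t^2/(2*(v:ℝ))) * Real.exp (-(t/(v:ℝ)*t)) =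
            Real.exp (-(t^2) / (2*(v:ℝ))) := by
          rw [← Real.exp_add]
          congr 1
          field_simp
          ring
        have hsplit : C * (a⁻¹ * Real.exp (-(a*t))) =
            ((Real.sqrt (2*Real.pi*v))⁻¹ * a⁻¹) * Real.exp (-(t^2) / (2*v)) := by
          rw [hC, hadef, ← hee]
          ring
        rw [hsplit]
        have hfac : (Real.sqrt (2*Real.pi*v))⁻¹ * a⁻¹ ≤ 1 := by
          have h1 : Real.sqrt v ≤ Real.sqrt (2*Real.pi*v) := by
            apply Real.sqrt_le_sqrt
            nlinarith [Real.pi_gt_three]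
          have h2 : a⁻¹ ≤ Real.sqrt v := by
            rw [hadef, inv_div]
            calc (v:ℝ)/t ≤ (v:ℝ)/Real.sqrt v := by
                  apply div_le_div_of_nonneg_left (le_of_lt hv) hsv ht
              _ = Real.sqrt v := Real.div_sqrt
          have h3 : 0 < Real.sqrt (2*Real.pi*v) := lt_of_lt_of_le hsv h1
          rw [inv_mul_le_iff₀ h3, mul_one]
          calc a⁻¹ ≤ Real.sqrt v := h2
            _ ≤ Real.sqrt (2*Real.pi*v) := h1
        calc ((Real.sqrt (2*Real.pi*v))⁻¹ * a⁻¹) * Real.exp (-(t^2) / (2*v))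
            ≤ 1 * Real.exp (-(t^2) / (2*v)) :=
              mul_le_mul_of_nonneg_right hfac (le_of_lt (Real.exp_pos _))
          _ = Real.exp (-(t^2) / (2*v)) := one_mul _


/-- the energy threshold -/
def thr (c : ℝ) (N : ℕ) : ℝ := Real.sqrt (2 * (1 + c) * N * Real.log N)

lemma tail_bound {c : ℝ} (hc : 0 < c) {N : ℕ} (hN : 2 ≤ N) :
    gaussianReal 0 (N : ℝ≥0) (Set.Ioi (thr c N)) ≤
      ENNReal.ofReal (Real.exp (-((1+c) * Real.log N))) := by
  have hN0 : (0:ℝ) < (N:ℝ) := by positivity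
  have hlog : 0 < Real.log N := Real.log_pos (by exact_mod_cast hN)
  have hco : ((N : ℝ≥0) : ℝ) = (N : ℝ) := by simp
  have harg : (0:ℝ) ≤ 2 * (1 + c) * N * Real.log N := by positivity
  have hsq : (thr c N)^2 = 2 * (1 + c) * N * Real.log N := Real.sq_sqrt harg
  have hlog2 : (0.6931471803 : ℝ) < Real.log 2 := Real.log_two_gt_d9
  have hlogN2 : Real.log 2 ≤ Real.log N := by
    apply Real.log_le_log (by norm_num)
    exact_mod_cast hN
  have ht : Real.sqrt ((N:ℝ≥0) : ℝ) ≤ thr c N := by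
    rw [hco]
    apply Real.sqrt_le_sqrt
    have h1 : (1:ℝ) ≤ 2*(1+c)*Real.log N := by nlinarith
    nlinarith [mul_le_mul_of_nonneg_left h1 (le_of_lt hN0)]
  calc gaussianReal 0 (N : ℝ≥0) (Set.Ioi (thr c N))
      ≤ ENNReal.ofReal (Real.exp (-((thr c N)^2) / (2 * ((N:ℝ≥0):ℝ)))) :=
        gaussian_tail (by rw [hco]; positivity) ht
    _ = ENNReal.ofReal (Real.exp (-((1+c) * Real.log N))) := by
        congr 1
        rw [hco, hsq]
        congr 1
        field_simp

lemma prob_all_gt (τ : ℝ) (T : Finset (Conf N)) :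
    QN N {H | ∀ σ ∈ T, τ < H σ} = (gaussianReal 0 (N:ℝ≥0) (Set.Ioi τ)) ^ T.card := by
  have hset : {H : Conf N → ℝ | ∀ σ ∈ T, τ < H σ} =
      Set.pi Set.univ (fun σ => if σ ∈ T then Set.Ioi τ else Set.univ) := by
    ext H
    simp only [Set.mem_pi, Set.mem_univ, forall_true_left, Set.mem_setOf_eq]
    constructor
    · intro h σ
      split_ifs with hσ
      · exact h σ hσ
      · trivial
    · intro h σ hσ
      have := h σ
      rw [if_pos hσ] at this
      exact this
  rw [QN, hset, Measure.pi_pi]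
  have hfac : ∀ σ : Conf N, (gaussianReal 0 (N:ℝ≥0)) (if σ ∈ T then Set.Ioi τ else Set.univ) =
      (if σ ∈ T then (gaussianReal 0 (N:ℝ≥0)) (Set.Ioi τ) else 1) := by
    intro σ
    split_ifs
    · rfl
    · exact measure_univ
  rw [Finset.prod_congr rfl (fun σ _ => hfac σ), Finset.prod_ite_mem Finset.univ T,
    Finset.univ_inter, Finset.prod_const]

def blockSet (τ : ℝ) (F : Finset (Finset (Conf N))) : Set (Conf N → ℝ) :=
  {H | ∀ I ∈ F, ∃ z ∈ I, τ < H z}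

lemma blockSet_measurable (τ : ℝ) (F : Finset (Finset (Conf N))) :
    MeasurableSet (blockSet τ F) := by
  have : blockSet τ F = ⋂ I ∈ (F : Set (Finset (Conf N))), ⋃ z ∈ (I : Set (Conf N)),
      {H : Conf N → ℝ | τ < H z} := by
    ext H
    simp [blockSet]
  rw [this]
  apply MeasurableSet.biInter F.countable_toSet
  intro I _
  apply MeasurableSet.biUnion I.countable_toSet
  intro z _
  exact measurableSet_preimage (measurable_pi_apply z) measurableSet_Ioi

lemma blockSet_le (τ : ℝ) (F : Finset (Finset (Conf N)))
    (hdisj : ∀ I ∈ F, ∀ I' ∈ F, I ≠ I' → Disjoint I I')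
    (hcard : ∀ I ∈ F, I.card ≤ N) :
    QN N (blockSet τ F) ≤
      ((N : ℝ≥0∞) * gaussianReal 0 (N:ℝ≥0) (Set.Ioi τ)) ^ F.card := by
  classical
  set p := gaussianReal 0 (N:ℝ≥0) (Set.Ioi τ) with hp
  have hsub : blockSet τ F ⊆ ⋃ g ∈ F.pi (fun I => I),
      {H : Conf N → ℝ | ∀ I, ∀ hI : I ∈ F, τ < H (g I hI)} := by
    intro H hH
    choose z hz1 hz2 using hH
    exact Set.mem_biUnion (Finset.mem_pi.mpr (fun I hI => hz1 I hI))
      (fun I hI => hz2 I hI)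
  have hterm : ∀ g ∈ F.pi (fun I => I),
      QN N {H : Conf N → ℝ | ∀ I, ∀ hI : I ∈ F, τ < H (g I hI)} = p ^ F.card := by
    intro g hg
    rw [Finset.mem_pi] at hg
    set T : Finset (Conf N) := F.attach.image (fun I => g I.1 I.2) with hT
    have hTeq : {H : Conf N → ℝ | ∀ I, ∀ hI : I ∈ F, τ < H (g I hI)} =
        {H : Conf N → ℝ | ∀ σ ∈ T, τ < H σ} := by
      ext H
      simp only [Set.mem_setOf_eq, hT, Finset.mem_image, Finset.mem_attach, true_and,
        Subtype.exists]
      constructor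
      · rintro h σ ⟨I, hI, rfl⟩
        exact h I hI
      · intro h I hI
        exact h _ ⟨I, hI, rfl⟩
    have hTcard : T.card = F.card := by
      rw [hT, Finset.card_image_of_injOn, Finset.card_attach]
      intro I _ I' _ heq
      by_contra hne
      have hne' : (I : Finset (Conf N)) ≠ (I' : Finset (Conf N)) :=
        fun h => hne (Subtype.ext h)
      have hd := hdisj I.1 I.2 I'.1 I'.2 hne'
      rw [Finset.disjoint_left] at hd
      have heq' : g I.1 I.2 = g I'.1 I'.2 := heq
      exact hd (hg I.1 I.2) (by rw [heq']; exact hg I'.1 I'.2)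
    rw [hTeq, prob_all_gt, hTcard]
  calc QN N (blockSet τ F)
      ≤ ∑ g ∈ F.pi (fun I => I),
          QN N {H : Conf N → ℝ | ∀ I, ∀ hI : I ∈ F, τ < H (g I hI)} :=
        le_trans (measure_mono hsub) (measure_biUnion_finset_le _ _)
    _ = ∑ g ∈ F.pi (fun I => I), p ^ F.card := Finset.sum_congr rfl hterm
    _ = ((F.pi (fun I => I)).card : ℝ≥0∞) * p ^ F.card := by
        rw [Finset.sum_const, nsmul_eq_mul]
    _ ≤ ((N : ℝ≥0∞) ^ F.card) * p ^ F.card := by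
        apply mul_le_mul_left
        rw [Finset.card_pi]
        calc ((∏ I ∈ F, I.card : ℕ) : ℝ≥0∞) ≤ ((N ^ F.card : ℕ) : ℝ≥0∞) := by
              apply Nat.cast_le.mpr
              exact Finset.prod_le_pow_card F _ N hcard
          _ = (N : ℝ≥0∞) ^ F.card := by rw [Nat.cast_pow]
    _ = ((N : ℝ≥0∞) * p) ^ F.card := (mul_pow _ _ _).symm


end Measure
-- STAGE 8
lemma pair_bound {c : ℝ} (hc : 0 < c) {N : ℕ} (hN2 : 2 ≤ N) {x y : Conf N} (hxy : x ≠ y) :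
    QN N (blockSet (thr c N) (fam x y)) ≤
      ENNReal.ofReal ((N:ℝ) ^ (-c)) ^ (N - 1) := by
  have hN0 : (0:ℝ) < (N:ℝ) := by positivity
  rcases fam_big hxy with hempty | hbig
  · have hblock : blockSet (thr c N) (fam x y) = ∅ := by
      rw [Set.eq_empty_iff_forall_notMem]
      intro H hH
      obtain ⟨z, hz, -⟩ := hH ∅ hempty
      simp at hz
    rw [hblock]
    simp
  · have hb := blockSet_le (thr c N) (fam x y) fam_pairwise_disjoint fam_card_le
    have hNp : (N : ℝ≥0∞) * gaussianReal 0 (N:ℝ≥0) (Set.Ioi (thr c N)) ≤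
        ENNReal.ofReal ((N:ℝ) ^ (-c)) := by
      calc (N : ℝ≥0∞) * gaussianReal 0 (N:ℝ≥0) (Set.Ioi (thr c N))
          ≤ (N : ℝ≥0∞) * ENNReal.ofReal (Real.exp (-((1+c) * Real.log N))) :=
            mul_le_mul_right (tail_bound hc hN2) _
        _ = ENNReal.ofReal ((N:ℝ) * Real.exp (-((1+c) * Real.log N))) := by
            rw [ENNReal.ofReal_mul (by positivity), ENNReal.ofReal_natCast]
        _ = ENNReal.ofReal ((N:ℝ) ^ (-c)) := by
            congr 1
            rw [Real.rpow_def_of_pos hN0]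
            nth_rewrite 1 [← Real.exp_log hN0]
            rw [← Real.exp_add]
            congr 1
            ring
    have hle1 : ENNReal.ofReal ((N:ℝ) ^ (-c)) ≤ 1 := by
      rw [← ENNReal.ofReal_one]
      apply ENNReal.ofReal_le_ofReal
      apply Real.rpow_le_one_of_one_le_of_nonpos
      · exact_mod_cast Nat.one_le_of_lt hN2
      · linarith
    calc QN N (blockSet (thr c N) (fam x y))
        ≤ ((N : ℝ≥0∞) * gaussianReal 0 (N:ℝ≥0) (Set.Ioi (thr c N))) ^ (fam x y).card := hb
      _ ≤ ENNReal.ofReal ((N:ℝ) ^ (-c)) ^ (fam x y).card := pow_le_pow_left' hNp _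
      _ ≤ ENNReal.ofReal ((N:ℝ) ^ (-c)) ^ (N - 1) :=
          pow_le_pow_right_of_le_one' hle1 hbig

lemma numeric {c : ℝ} (hc : 0 < c) {N : ℕ} (hN3 : 3 ≤ N)
    (hlogN : 2 * (Real.log 4 + c) / c ≤ Real.log N) :
    (4:ℝ)^N * ((N:ℝ) ^ (-c)) ^ (N - 1) ≤ Real.exp (-c * N) := by
  have hN0 : (0:ℝ) < (N:ℝ) := by positivity
  have hcast : ((N - 1 : ℕ) : ℝ) = (N:ℝ) - 1 := by
    rw [Nat.cast_sub (by omega)]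
    simp
  have h4 : (4:ℝ)^N = Real.exp ((N:ℝ) * Real.log 4) := by
    rw [Real.exp_nat_mul, Real.exp_log (by norm_num)]
  have hrp : ((N:ℝ) ^ (-c)) ^ (N - 1) = Real.exp (((N:ℝ) - 1) * (Real.log N * (-c))) := by
    rw [Real.rpow_def_of_pos hN0, ← Real.exp_nat_mul, hcast]
  rw [h4, hrp, ← Real.exp_add, Real.exp_le_exp]
  have hlog4 : (0:ℝ) < Real.log 4 := Real.log_pos (by norm_num)
  have hN3' : (3:ℝ) ≤ (N:ℝ) := by exact_mod_cast hN3
  have h1 : c * ((N:ℝ) - 1) * (2 * (Real.log 4 + c) / c) ≤ c * ((N:ℝ) - 1) * Real.log N :=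
    mul_le_mul_of_nonneg_left hlogN (by nlinarith)
  have h2 : c * ((N:ℝ) - 1) * (2 * (Real.log 4 + c) / c) = 2 * ((N:ℝ) - 1) * (Real.log 4 + c) := by
    field_simp
  have h3 : (N:ℝ) * (Real.log 4 + c) ≤ 2 * ((N:ℝ) - 1) * (Real.log 4 + c) := by
    nlinarith
  nlinarith



end REMaux

theorem statement13 (c : ℝ) (hc : 0 < c) :
    ∃ N₀ : ℕ, ∀ N : ℕ, N₀ ≤ N →
      ENNReal.ofReal (1 - Real.exp (-c * N)) ≤
        QN N { H : Conf N → ℝ | ∀ x y : Conf N, x ≠ y →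
          ∃ l : List (Conf N),
            -- a self-avoiding path from `x` to `y` along single spin flips
            l.head? = some x ∧ l.getLast? = some y ∧ l.Nodup ∧
            (∀ e ∈ l.zip l.tail, hammingDist e.1 e.2 = 1) ∧
            -- of length at most `N`
            l.length ≤ N + 1 ∧
            -- whose interior points all have energy at most `√(2(1+c) N log N)`
            ∀ z ∈ l.tail.dropLast, H z ≤ Real.sqrt (2 * (1 + c) * N * Real.log N) } := by
  classical
  set K := 2 * (Real.log 4 + c) / c with hK
  refine ⟨max 3 (⌈Real.exp K⌉₊ + 1), ?_⟩
  intro N hN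
  have hN3 : 3 ≤ N := le_trans (le_max_left _ _) hN
  have hN2 : 2 ≤ N := by omega
  have hceil : ⌈Real.exp K⌉₊ + 1 ≤ N := le_trans (le_max_right _ _) hN
  have hexpK : Real.exp K ≤ (N:ℝ) := by
    calc Real.exp K ≤ (⌈Real.exp K⌉₊ : ℝ) := Nat.le_ceil _
      _ ≤ (N:ℝ) := by exact_mod_cast Nat.le_of_succ_le hceil
  have hlogN : K ≤ Real.log N := by
    rw [← Real.log_exp K]
    exact Real.log_le_log (Real.exp_pos _) hexpK
  haveI : IsProbabilityMeasure (QN N) := by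
    unfold QN
    infer_instance
  set τ := REMaux.thr c N with hτ
  set Bad : Set (Conf N → ℝ) :=
    ⋃ (x : Conf N) (y : Conf N) (_ : x ≠ y), REMaux.blockSet τ (REMaux.fam x y) with hBad
  have hBadMeas : MeasurableSet Bad := by
    apply MeasurableSet.iUnion
    intro x
    apply MeasurableSet.iUnion
    intro y
    apply MeasurableSet.iUnion
    intro h
    exact REMaux.blockSet_measurable _ _
  have hpair : ∀ x y : Conf N, QN N (⋃ (_ : x ≠ y), REMaux.blockSet τ (REMaux.fam x y)) ≤
      ENNReal.ofReal ((N:ℝ) ^ (-c)) ^ (N - 1) := by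
    intro x y
    by_cases hxy : x = y
    · have hempty : (⋃ (_ : x ≠ y), REMaux.blockSet τ (REMaux.fam x y)) = ∅ := by
        simp [hxy]
      rw [hempty]
      simp
    · have : (⋃ (_ : x ≠ y), REMaux.blockSet τ (REMaux.fam x y)) = REMaux.blockSet τ (REMaux.fam x y) := by
        simp [hxy]
      rw [this]
      exact REMaux.pair_bound hc hN2 hxy
  have hcardC : Fintype.card (Conf N) = 2 ^ N := by
    simp [Conf]
  have hBadLe : QN N Bad ≤ ENNReal.ofReal (Real.exp (-c * N)) := by
    have hr0 : (0:ℝ) ≤ (N:ℝ) ^ (-c) := Real.rpow_nonneg (by positivity) _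
    calc QN N Bad ≤ ∑ x : Conf N, QN N (⋃ (y : Conf N) (_ : x ≠ y), REMaux.blockSet τ (REMaux.fam x y)) :=
          measure_iUnion_fintype_le _ _
      _ ≤ ∑ x : Conf N, ∑ y : Conf N, QN N (⋃ (_ : x ≠ y), REMaux.blockSet τ (REMaux.fam x y)) :=
          Finset.sum_le_sum (fun x _ => measure_iUnion_fintype_le _ _)
      _ ≤ ∑ _x : Conf N, ∑ _y : Conf N, ENNReal.ofReal ((N:ℝ) ^ (-c)) ^ (N - 1) :=
          Finset.sum_le_sum (fun x _ => Finset.sum_le_sum (fun y _ => hpair x y))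
      _ = ((2^N * 2^N : ℕ) : ℝ≥0∞) * ENNReal.ofReal ((N:ℝ) ^ (-c)) ^ (N - 1) := by
          rw [Finset.sum_const, Finset.sum_const, Finset.card_univ, hcardC, smul_smul,
            nsmul_eq_mul, Nat.cast_mul]
      _ = ENNReal.ofReal ((4:ℝ)^N * ((N:ℝ) ^ (-c)) ^ (N - 1)) := by
          rw [← ENNReal.ofReal_pow hr0, ← ENNReal.ofReal_natCast (2^N * 2^N),
            ← ENNReal.ofReal_mul (by positivity)]
          congr 2
          push_cast
          rw [← mul_pow]
          norm_num
      _ ≤ ENNReal.ofReal (Real.exp (-c * N)) :=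
          ENNReal.ofReal_le_ofReal (REMaux.numeric hc hN3 hlogN)
  have hsub : Badᶜ ⊆ { H : Conf N → ℝ | ∀ x y : Conf N, x ≠ y →
      ∃ l : List (Conf N),
        l.head? = some x ∧ l.getLast? = some y ∧ l.Nodup ∧
        (∀ e ∈ l.zip l.tail, hammingDist e.1 e.2 = 1) ∧
        l.length ≤ N + 1 ∧
        ∀ z ∈ l.tail.dropLast, H z ≤ Real.sqrt (2 * (1 + c) * N * Real.log N) } := by
    intro H hH
    intro x y hxy
    have hnotblock : H ∉ REMaux.blockSet τ (REMaux.fam x y) := by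
      intro hb
      exact hH (Set.mem_iUnion.mpr ⟨x, Set.mem_iUnion.mpr ⟨y, Set.mem_iUnion.mpr ⟨hxy, hb⟩⟩⟩)
    rw [REMaux.blockSet, Set.mem_setOf_eq] at hnotblock
    push_neg at hnotblock
    obtain ⟨I, hI, hgood⟩ := hnotblock
    obtain ⟨l, hl⟩ := REMaux.fam_good hxy H τ I hI hgood
    exact ⟨l, hl.1, hl.2.1, hl.2.2.1, hl.2.2.2.1, hl.2.2.2.2.1, hl.2.2.2.2.2⟩
  have hexp1 : Real.exp (-c * N) ≤ 1 := by
    apply Real.exp_le_one_iff.mpr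
    have : (0:ℝ) ≤ c * N := by positivity
    linarith
  calc ENNReal.ofReal (1 - Real.exp (-c * N))
      = 1 - ENNReal.ofReal (Real.exp (-c * N)) := by
        rw [ENNReal.ofReal_sub _ (le_of_lt (Real.exp_pos _)), ENNReal.ofReal_one]
    _ ≤ 1 - QN N Bad := tsub_le_tsub_left hBadLe 1
    _ = QN N Badᶜ := (prob_compl_eq_one_sub hBadMeas).symm
    _ ≤ _ := measure_mono hsub


end
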